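/- Let u_λ solve (1/2)u'' = λu on the N-legged spider where leg 1 has length L with u(L) = 1 at its endpoint, legs 2,…,N are infinite half-lines on which u is bounded, with continuity and Kirchhoff conditions at the origin. Then u(0) = 1/(cosh(√(2λ)L) + (N-1)sinh(√(2λ)L)) = (2/N)·e^{-√(2λ)L}/(1 - ((N-2)/N)e^{-2√(2λ)L}). -/

import Mathlib

open Real Set Filter

lemma spider_lin_ode (f : ℝ → ℝ) (μ x : ℝ) (hx : 0 ≤ x) (hf : ContDiff ℝ 1 f)
    (hder : ∀ y ∈ Icc (0:ℝ) x, deriv f y = μ * f y) :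
    f x = f 0 * Real.exp (μ * x) := by
  set F : ℝ → ℝ := fun y => f y * Real.exp (-μ * y) with hF
  have key : ∀ y ∈ Icc (0:ℝ) x, F y = F 0 := by
    apply constant_of_has_deriv_right_zero
    · exact ((hf.continuous).mul (by continuity)).continuousOn
    · intro y hy
      have h1 : HasDerivAt f (μ * f y) y := by
        have := ((hf.differentiable one_ne_zero) y).hasDerivAt
        rwa [hder y ⟨hy.1, hy.2.le⟩] at this
      have h2 : HasDerivAt (fun y => Real.exp (-μ * y)) (Real.exp (-μ * y) * (-μ)) y :=
        ((hasDerivAt_id y).const_mul (-μ)).exp.congr_deriv (by simp)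
      have h3 := h1.mul h2
      have h0 : μ * f y * Real.exp (-μ * y) + f y * (Real.exp (-μ * y) * (-μ)) = 0 := by ring
      rw [h0] at h3
      exact h3.hasDerivWithinAt
  have hx' := key x ⟨hx, le_rfl⟩
  simp only [hF, mul_zero, Real.exp_zero, mul_one] at hx'
  have : f x = f x * Real.exp (-(μ * x)) * Real.exp (μ * x) := by
    rw [mul_assoc, ← Real.exp_add]; simp
  rw [neg_mul] at hx'
  rw [this, hx']

lemma spider_ode2 (f : ℝ → ℝ) (μ x : ℝ) (hμ : 0 < μ) (hx : 0 ≤ x) (hf : ContDiff ℝ 2 f)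
    (hder : ∀ y ∈ Icc (0:ℝ) x, deriv (deriv f) y = μ ^ 2 * f y) :
    f x = ((f 0 + deriv f 0 / μ) / 2) * Real.exp (μ * x)
        + ((f 0 - deriv f 0 / μ) / 2) * Real.exp (-(μ * x)) := by
  have hf1 : Differentiable ℝ f := hf.differentiable two_ne_zero
  have hdf : ContDiff ℝ 1 (deriv f) := by
    have := (contDiff_succ_iff_deriv (n := 1)).mp (by exact_mod_cast hf)
    exact this.2.2
  have hdf1 : Differentiable ℝ (deriv f) := hdf.differentiable one_ne_zero
  set g : ℝ → ℝ := fun y => deriv f y - μ * f y with hg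
  set h : ℝ → ℝ := fun y => deriv f y + μ * f y with hh
  have hgC : ContDiff ℝ 1 g := hdf.sub ((contDiff_const.mul (hf.of_le one_le_two)))
  have hhC : ContDiff ℝ 1 h := hdf.add ((contDiff_const.mul (hf.of_le one_le_two)))
  have hgd : ∀ y ∈ Icc (0:ℝ) x, deriv g y = (-μ) * g y := by
    intro y hy
    have : deriv g y = deriv (deriv f) y - μ * deriv f y := by
      rw [hg]
      rw [deriv_fun_sub (hdf1 y) (((hf1 y).const_mul μ))]
      rw [deriv_const_mul μ (hf1 y)]
    rw [this, hder y hy]; simp only [hg]; ring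
  have hhd : ∀ y ∈ Icc (0:ℝ) x, deriv h y = μ * h y := by
    intro y hy
    have : deriv h y = deriv (deriv f) y + μ * deriv f y := by
      rw [hh]
      rw [deriv_fun_add (hdf1 y) (((hf1 y).const_mul μ))]
      rw [deriv_const_mul μ (hf1 y)]
    rw [this, hder y hy]; simp only [hh]; ring
  have hgx := spider_lin_ode g (-μ) x hx hgC hgd
  have hhx := spider_lin_ode h μ x hx hhC hhd
  have hfx : f x = (h x - g x) / (2 * μ) := by
    simp only [hg, hh]; field_simp; ring
  rw [hfx, hgx, hhx]
  simp only [hg, hh, neg_mul]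
  field_simp
  ring

/-- Spider with one finite leg of length `L` (boundary value `1` there) and `N-1` infinite legs
on which the solution of `(1/2)u'' = λu` is bounded; with continuity and Kirchhoff conditions
at the origin the value at the origin is
`1/(cosh(√(2λ)L) + (N-1)sinh(√(2λ)L)) = (2/N) e^{-√(2λ)L}/(1 - ((N-2)/N) e^{-2√(2λ)L})`. -/
theorem spider_hitting_one_leg (N : ℕ) (hN : 2 ≤ N) (L lam : ℝ) (hL : 0 < L) (hlam : 0 < lam)
    (i₀ : Fin N) (u : Fin N → ℝ → ℝ)
    (hC2 : ∀ i, ContDiff ℝ 2 (u i))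
    (hODE0 : ∀ x ∈ Icc (0:ℝ) L, (1/2) * deriv (deriv (u i₀)) x = lam * u i₀ x)
    (hODE : ∀ i, i ≠ i₀ → ∀ x ∈ Ici (0:ℝ), (1/2) * deriv (deriv (u i)) x = lam * u i x)
    (hbdd : ∀ i, i ≠ i₀ → ∃ C, ∀ x ∈ Ici (0:ℝ), |u i x| ≤ C)
    (hbdry : u i₀ L = 1)
    (hcont : ∀ i j, u i 0 = u j 0)
    (hKirchhoff : ∑ i : Fin N, deriv (u i) 0 = 0) :
    u i₀ 0 = 1 / (Real.cosh (Real.sqrt (2*lam) * L)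
        + (N - 1 : ℝ) * Real.sinh (Real.sqrt (2*lam) * L)) ∧
      u i₀ 0 = (2 / N) * Real.exp (-(Real.sqrt (2*lam) * L)) /
        (1 - ((N - 2 : ℝ) / N) * Real.exp (-(2 * (Real.sqrt (2*lam) * L)))) := by
  set μ := Real.sqrt (2 * lam) with hμdef
  have hμ : 0 < μ := Real.sqrt_pos.mpr (by linarith)
  have hμ2 : μ ^ 2 = 2 * lam := Real.sq_sqrt (by linarith)
  have hleg : ∀ i, i ≠ i₀ → deriv (u i) 0 = -μ * u i 0 := by
    intro i hi
    set a := (u i 0 + deriv (u i) 0 / μ) / 2 with ha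
    set b := (u i 0 - deriv (u i) 0 / μ) / 2 with hb
    have hrep : ∀ x ∈ Ici (0:ℝ), u i x = a * Real.exp (μ * x) + b * Real.exp (-(μ * x)) := by
      intro x hx
      apply spider_ode2 (u i) μ x hμ hx (hC2 i)
      intro y hy
      have := hODE i hi y (mem_Ici.mpr hy.1)
      rw [hμ2]; linarith
    have ha0 : a = 0 := by
      by_contra ha0
      obtain ⟨C, hC⟩ := hbdd i hi
      have htend : Tendsto (fun x : ℝ => |a| * Real.exp (μ * x) - |b|) atTop atTop := by
        apply Filter.tendsto_atTop_add_const_right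
        apply Filter.Tendsto.const_mul_atTop (abs_pos.mpr ha0)
        exact Real.tendsto_exp_atTop.comp (Filter.Tendsto.const_mul_atTop hμ tendsto_id)
      obtain ⟨x, hx1, hx0⟩ := ((htend.eventually_gt_atTop C).and (eventually_ge_atTop (0:ℝ))).exists
      have hC' := hC x (mem_Ici.mpr hx0)
      rw [hrep x (mem_Ici.mpr hx0)] at hC'
      have h1 : |a * Real.exp (μ * x)| = |a| * Real.exp (μ * x) := by
        rw [abs_mul, abs_of_pos (Real.exp_pos _)]
      have h2 : |b * Real.exp (-(μ * x))| ≤ |b| := by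
        rw [abs_mul, abs_of_pos (Real.exp_pos _)]
        calc |b| * Real.exp (-(μ * x)) ≤ |b| * 1 := by
              apply mul_le_mul_of_nonneg_left _ (abs_nonneg _)
              exact Real.exp_le_one_iff.mpr (by nlinarith)
            _ = |b| := mul_one _
      have h3 : |a| * Real.exp (μ * x) - |b| ≤ |a * Real.exp (μ * x) + b * Real.exp (-(μ * x))| := by
        have := abs_sub_abs_le_abs_sub (a * Real.exp (μ * x)) (-(b * Real.exp (-(μ * x))))
        simp only [abs_neg, sub_neg_eq_add] at this
        linarith [h1 ▸ this, h2]
      linarith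
    have h4 : u i 0 + deriv (u i) 0 / μ = 0 := by
      rw [ha] at ha0; linarith
    field_simp at h4 ⊢
    linarith
  have hder0 : deriv (u i₀) 0 = ((N : ℝ) - 1) * μ * u i₀ 0 := by
    have hsum := hKirchhoff
    rw [← Finset.add_sum_erase _ _ (Finset.mem_univ i₀)] at hsum
    have hconst : ∀ i ∈ Finset.univ.erase i₀, deriv (u i) 0 = -μ * u i₀ 0 := by
      intro i hi
      rw [hleg i (Finset.ne_of_mem_erase hi), hcont i i₀]
    rw [Finset.sum_congr rfl hconst, Finset.sum_const,
      Finset.card_erase_of_mem (Finset.mem_univ i₀)] at hsum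
    simp only [Finset.card_univ, Fintype.card_fin, nsmul_eq_mul] at hsum
    have hcast : ((N - 1 : ℕ) : ℝ) = (N : ℝ) - 1 := by
      rw [Nat.cast_sub (by omega)]; simp
    rw [hcast] at hsum
    linarith
  have hrep0 := spider_ode2 (u i₀) μ L hμ hL.le (hC2 i₀) (by
    intro y hy
    have := hODE0 y hy
    rw [hμ2]; linarith)
  rw [hbdry, hder0] at hrep0
  set A := u i₀ 0 with hA
  have hdiv : ((N : ℝ) - 1) * μ * A / μ = ((N : ℝ) - 1) * A := by field_simp
  rw [hdiv] at hrep0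
  have hAeq : A * (Real.cosh (μ * L) + ((N : ℝ) - 1) * Real.sinh (μ * L)) = 1 := by
    rw [Real.cosh_eq, Real.sinh_eq]
    linear_combination -hrep0
  have hpos : 0 < Real.cosh (μ * L) + ((N : ℝ) - 1) * Real.sinh (μ * L) := by
    have h1 : (1:ℝ) ≤ Real.cosh (μ * L) := Real.one_le_cosh _
    have h2 : 0 ≤ Real.sinh (μ * L) := Real.sinh_nonneg_iff.mpr (by positivity)
    have h3 : (1:ℝ) ≤ (N:ℝ) := by exact_mod_cast Nat.one_le_of_lt hN
    nlinarith
  have hfirst : A = 1 / (Real.cosh (μ * L) + ((N : ℝ) - 1) * Real.sinh (μ * L)) := by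
    field_simp
    linarith [hAeq]
  refine ⟨hfirst, ?_⟩
  rw [hfirst]
  set t := μ * L with ht
  have htpos : 0 < t := by positivity
  have hNpos : (0:ℝ) < N := by exact_mod_cast (by omega : 0 < N)
  have hN2 : (0:ℝ) ≤ (N:ℝ) - 2 := by
    have : (2:ℝ) ≤ (N:ℝ) := by exact_mod_cast hN
    linarith
  have hexp2 : Real.exp (-(2 * t)) = Real.exp (-t) * Real.exp (-t) := by
    rw [← Real.exp_add]; ring_nf
  have hprod : Real.exp t * Real.exp (-t) = 1 := by
    rw [← Real.exp_add]; simp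
  have hden2 : 0 < 1 - ((N - 2 : ℝ) / N) * (Real.exp (-t) * Real.exp (-t)) := by
    have he : Real.exp (-t) < 1 := Real.exp_lt_one_iff.mpr (by linarith)
    have he0 : 0 < Real.exp (-t) := Real.exp_pos _
    have hq : ((N:ℝ) - 2) / N < 1 := by
      rw [div_lt_one hNpos]; linarith
    have hq0 : 0 ≤ ((N:ℝ) - 2) / N := div_nonneg hN2 hNpos.le
    nlinarith
  rw [hexp2, Real.cosh_eq, Real.sinh_eq]
  rw [Real.cosh_eq, Real.sinh_eq] at hpos
  rw [div_eq_div_iff hpos.ne' hden2.ne']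
  field_simp
  linear_combination (-(N:ℝ)) * hprod
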